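/- For the filter function μ(λ) = β(λ) + iγ(λ) with ω > 0, T = 2π/ω, if λ > ω then |μ(λ)| ≤ (3/(2π)) · ω/(λ − ω). -/

import Mathlib

open Real MeasureTheory intervalIntegral

lemma int_cos_c (c T : ℝ) (hc : c ≠ 0) :
    (∫ t in (0:ℝ)..T, Real.cos (c * t)) = Real.sin (c * T) / c := by
  rw [intervalIntegral.integral_comp_mul_left Real.cos hc]
  simp [integral_cos, div_eq_inv_mul]

lemma int_sin_c (c T : ℝ) (hc : c ≠ 0) :
    (∫ t in (0:ℝ)..T, Real.sin (c * t)) = (1 - Real.cos (c * T)) / c := by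
  rw [intervalIntegral.integral_comp_mul_left Real.sin hc]
  simp [integral_sin, div_eq_inv_mul]

lemma intg_cos (c : ℝ) (a b : ℝ) : IntervalIntegrable (fun t => Real.cos (c * t)) volume a b :=
  (Real.continuous_cos.comp (continuous_const.mul continuous_id)).intervalIntegrable a b

lemma intg_sin (c : ℝ) (a b : ℝ) : IntervalIntegrable (fun t => Real.sin (c * t)) volume a b :=
  (Real.continuous_sin.comp (continuous_const.mul continuous_id)).intervalIntegrable a b

lemma int_beta (ω lam T : ℝ) (h1 : lam + ω ≠ 0) (h2 : lam - ω ≠ 0) (h3 : lam ≠ 0) :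
    (∫ t in (0:ℝ)..T, (Real.cos (ω*t) - 1/4) * Real.cos (lam*t))
    = Real.sin ((lam+ω)*T)/(2*(lam+ω)) + Real.sin ((lam-ω)*T)/(2*(lam-ω))
      - Real.sin (lam*T)/(4*lam) := by
  have hcongr : (∫ t in (0:ℝ)..T, (Real.cos (ω*t) - 1/4) * Real.cos (lam*t))
      = ∫ t in (0:ℝ)..T, ((1/2) * Real.cos ((lam+ω)*t) + (1/2) * Real.cos ((lam-ω)*t)
        - (1/4) * Real.cos (lam*t)) := by
    apply intervalIntegral.integral_congr
    intro t _
    simp only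
    rw [show (lam+ω)*t = lam*t + ω*t by ring, show (lam-ω)*t = lam*t - ω*t by ring,
      Real.cos_add, Real.cos_sub]
    ring
  rw [hcongr, intervalIntegral.integral_sub (((intg_cos (lam+ω) 0 T).const_mul _).add
      ((intg_cos (lam-ω) 0 T).const_mul _)) ((intg_cos lam 0 T).const_mul _),
    intervalIntegral.integral_add ((intg_cos (lam+ω) 0 T).const_mul _)
      ((intg_cos (lam-ω) 0 T).const_mul _),
    intervalIntegral.integral_const_mul, intervalIntegral.integral_const_mul,
    intervalIntegral.integral_const_mul, int_cos_c _ _ h1, int_cos_c _ _ h2, int_cos_c _ _ h3]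
  field_simp

lemma int_gamma (ω lam T : ℝ) (h1 : lam + ω ≠ 0) (h2 : lam - ω ≠ 0) (h3 : lam ≠ 0) :
    (∫ t in (0:ℝ)..T, (Real.cos (ω*t) - 1/4) * Real.sin (lam*t))
    = (1 - Real.cos ((lam+ω)*T))/(2*(lam+ω)) + (1 - Real.cos ((lam-ω)*T))/(2*(lam-ω))
      - (1 - Real.cos (lam*T))/(4*lam) := by
  have hcongr : (∫ t in (0:ℝ)..T, (Real.cos (ω*t) - 1/4) * Real.sin (lam*t))
      = ∫ t in (0:ℝ)..T, ((1/2) * Real.sin ((lam+ω)*t) + (1/2) * Real.sin ((lam-ω)*t)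
        - (1/4) * Real.sin (lam*t)) := by
    apply intervalIntegral.integral_congr
    intro t _
    simp only
    rw [show (lam+ω)*t = lam*t + ω*t by ring, show (lam-ω)*t = lam*t - ω*t by ring,
      Real.sin_add, Real.sin_sub]
    ring
  rw [hcongr, intervalIntegral.integral_sub (((intg_sin (lam+ω) 0 T).const_mul _).add
      ((intg_sin (lam-ω) 0 T).const_mul _)) ((intg_sin lam 0 T).const_mul _),
    intervalIntegral.integral_add ((intg_sin (lam+ω) 0 T).const_mul _)
      ((intg_sin (lam-ω) 0 T).const_mul _),
    intervalIntegral.integral_const_mul, intervalIntegral.integral_const_mul,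
    intervalIntegral.integral_const_mul, int_sin_c _ _ h1, int_sin_c _ _ h2, int_sin_c _ _ h3]
  field_simp

/-- if λ > ω then |μ(λ)| ≤ (3/(2π)) · ω/(λ − ω). -/
theorem filter_bound_decay (ω : ℝ) (hω : 0 < ω) (T : ℝ) (hT : T = 2 * π / ω)
    (β γ : ℝ → ℝ)
    (hβ : ∀ lam, β lam = (2 / T) * ∫ t in (0:ℝ)..T,
        (Real.cos (ω * t) - 1 / 4) * Real.cos (lam * t))
    (hγ : ∀ lam, γ lam = (2 / T) * ∫ t in (0:ℝ)..T,
        (Real.cos (ω * t) - 1 / 4) * Real.sin (lam * t))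
    (μ : ℝ → ℂ) (hμ : ∀ lam, μ lam = (β lam : ℂ) + Complex.I * (γ lam : ℂ))
    (lam : ℝ) (hlam : ω < lam) :
    ‖μ lam‖ ≤ (3 / (2 * π)) * ω / (lam - ω) := by
  have hπ : (0:ℝ) < π := Real.pi_pos
  have hT0 : 0 < T := by rw [hT]; positivity
  have hlam0 : 0 < lam := hω.trans hlam
  have hpω : 0 < lam + ω := by linarith
  have hmω : 0 < lam - ω := by linarith
  have hsq : 0 < lam ^ 2 - ω ^ 2 := by nlinarith
  have hωT : ω * T = 2 * π := by rw [hT]; field_simp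
  have hplus : (lam + ω) * T = lam * T + 2 * π := by rw [← hωT]; ring
  have hminus : (lam - ω) * T = lam * T - 2 * π := by rw [← hωT]; ring
  set s := Real.sin (lam * T) with hs
  set c := Real.cos (lam * T) with hc
  set K := (2 / T) * ((3 * lam ^ 2 + ω ^ 2) / (4 * lam * (lam ^ 2 - ω ^ 2))) with hK
  have hKpos : 0 < K := by
    apply mul_pos (by positivity)
    exact div_pos (by positivity) (by positivity)
  have hβv : β lam = K * s := by
    rw [hβ, int_beta ω lam T hpω.ne' hmω.ne' hlam0.ne', hplus, hminus,
      Real.sin_add_two_pi, Real.sin_sub_two_pi, hK, ← hs]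
    field_simp
    ring
  have hγv : γ lam = K * (1 - c) := by
    rw [hγ, int_gamma ω lam T hpω.ne' hmω.ne' hlam0.ne', hplus, hminus,
      Real.cos_add_two_pi, Real.cos_sub_two_pi, hK, ← hc]
    field_simp
    ring
  have hμv : μ lam = (K : ℂ) * ((s : ℂ) + Complex.I * ((1 - c : ℝ) : ℂ)) := by
    rw [hμ, hβv, hγv]; push_cast; ring
  have hzabs : ‖(s : ℂ) + Complex.I * ((1 - c : ℝ) : ℂ)‖ ≤ 2 := by
    set z := (s : ℂ) + Complex.I * ((1 - c : ℝ) : ℂ) with hz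
    have h1 : Complex.normSq z = s ^ 2 + (1 - c) ^ 2 := by
      rw [Complex.normSq_apply]
      simp [hz]
      ring
    have h2 : s ^ 2 + c ^ 2 = 1 := Real.sin_sq_add_cos_sq (lam * T)
    have h3 : -1 ≤ c := Real.neg_one_le_cos (lam * T)
    have h4 := Complex.sq_norm z
    have h5 := norm_nonneg z
    nlinarith [h4, h5, h1]
  rw [hμv, norm_mul, Complex.norm_real, Real.norm_eq_abs, abs_of_pos hKpos]
  have step1 : K * ‖(s : ℂ) + Complex.I * ((1 - c : ℝ) : ℂ)‖ ≤ 2 * K := by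
    rw [mul_comm 2 K]
    exact mul_le_mul_of_nonneg_left hzabs hKpos.le
  refine step1.trans ?_
  have hLHS : 2 * K = ω * (3 * lam ^ 2 + ω ^ 2) / (2 * π * (lam * (lam ^ 2 - ω ^ 2))) := by
    rw [hK, hT]; field_simp; ring
  have hRHS : (3 / (2 * π)) * ω / (lam - ω) = 3 * ω / (2 * π * (lam - ω)) := by
    rw [div_mul_eq_mul_div, div_div]
  rw [hLHS, hRHS, div_le_div_iff₀ (by positivity) (by positivity)]
  nlinarith [mul_pos hmω hpω, mul_pos hω hlam0, mul_pos (mul_pos hω hω) (mul_pos hmω hπ),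
    mul_pos (mul_pos hω hlam0) (mul_pos hmω hπ)]
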